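/- Let z_1, …, z_N be pairwise distinct complex numbers and let μ : 𝔤 → ℂ be any linear functional. Then the inhomogeneous quadratic Gaudin Hamiltonians pairwise commute: H_i^μ ∘ H_j^μ = H_j^μ ∘ H_i^μ as endomorphisms of V_1 ⊗ ⋯ ⊗ V_N, for all 1 ≤ i, j ≤ N. -/

import Mathlib

open scoped TensorProduct

noncomputable section

variable {𝔤 : Type*} [LieRing 𝔤] [LieAlgebra ℂ 𝔤]
variable {N : ℕ} (V : Fin N → Type*) [∀ i, AddCommGroup (V i)] [∀ i, Module ℂ (V i)]
  [∀ i, LieRingModule 𝔤 (V i)] [∀ i, LieModule ℂ 𝔤 (V i)]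

/-- The endomorphism `x^{(i)}` of `V 1 ⊗ ⋯ ⊗ V N` acting as `x` in the `i`-th tensor
factor and as the identity in the other factors. -/
def opAt (i : Fin N) (x : 𝔤) : Module.End ℂ (⨂[ℂ] j, V j) :=
  PiTensorProduct.map
    (Function.update (fun j => (LinearMap.id : V j →ₗ[ℂ] V j)) i
      (LieModule.toEnd ℂ 𝔤 (V i) x))

/-- The inhomogeneous quadratic Gaudin Hamiltonian
`H_i^μ = ∑_{k ≠ i} (z i - z k)⁻¹ ∑_a x_a^{(i)} ∘ x_a^{(k)} + ∑_a μ(x_a) x_a^{(i)}`. -/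
def gaudinHmu {d : ℕ} (b : Fin d → 𝔤) (μ : Module.Dual ℂ 𝔤) (z : Fin N → ℂ) (i : Fin N) :
    Module.End ℂ (⨂[ℂ] j, V j) :=
  (∑ k ∈ Finset.univ.erase i, (z i - z k)⁻¹ •
    ∑ a, opAt V i (b a) * opAt V k (b a)) +
  ∑ a, μ (b a) • opAt V i (b a)

namespace GaudinAux

lemma neg_mul_neg_helper {R : Type*} [Ring R] (a b : R) : -(-a * b) = a * b := by
  rw [neg_mul, neg_neg]

/-- Subtraction version of `PiTensorProduct.map_update_add`. -/
lemma map_update_sub (f : Π j, V j →ₗ[ℂ] V j) (i : Fin N) (u v : V i →ₗ[ℂ] V i) :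
    PiTensorProduct.map (Function.update f i (u - v))
      = PiTensorProduct.map (Function.update f i u)
        - PiTensorProduct.map (Function.update f i v) := by
  have h := PiTensorProduct.map_update_add (f := f) i (u - v) v
  rw [sub_add_cancel] at h
  rw [eq_sub_iff_add_eq, ← h]

/-- Composition at the same site. -/
lemma opAt_mul (i : Fin N) (x y : 𝔤) :
    opAt V i x * opAt V i y =
      PiTensorProduct.map (Function.update (fun j => (LinearMap.id : V j →ₗ[ℂ] V j)) i
        (LieModule.toEnd ℂ 𝔤 (V i) x * LieModule.toEnd ℂ 𝔤 (V i) y)) := by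
  rw [opAt, opAt, ← PiTensorProduct.map_mul]
  congr 1
  funext j
  rcases eq_or_ne j i with rfl | h
  · simp
  · simp [Function.update_of_ne h, Module.End.mul_eq_comp]

/-- Operators at distinct sites commute. -/
lemma opAt_comm (i k : Fin N) (h : i ≠ k) (x y : 𝔤) :
    opAt V i x * opAt V k y = opAt V k y * opAt V i x := by
  rw [opAt, opAt, ← PiTensorProduct.map_mul, ← PiTensorProduct.map_mul]
  congr 1
  funext j
  rcases eq_or_ne j i with rfl | hji
  · simp [Function.update_of_ne h.symm, Function.update_of_ne h, Module.End.mul_eq_comp]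
  · rcases eq_or_ne j k with rfl | hjk
    · simp [Function.update_of_ne hji, Module.End.mul_eq_comp]
    · simp [Function.update_of_ne hji, Function.update_of_ne hjk, Module.End.mul_eq_comp]

/-- `opAt V i` as a linear map in the Lie algebra element. -/
def opAtL (i : Fin N) : 𝔤 →ₗ[ℂ] Module.End ℂ (⨂[ℂ] j, V j) where
  toFun x := opAt V i x
  map_add' x y := by
    simp only [opAt, map_add, PiTensorProduct.map_update_add]
  map_smul' c x := by
    simp only [opAt, map_smul, PiTensorProduct.map_update_smul, RingHom.id_apply]

@[simp] lemma opAtL_apply (i : Fin N) (x : 𝔤) : opAtL V i x = opAt V i x := rfl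

lemma opAt_neg (i : Fin N) (x : 𝔤) : opAt V i (-x) = -opAt V i x :=
  map_neg (opAtL V i) x

/-- Bracket at the same site. -/
lemma opAt_lie (i : Fin N) (x y : 𝔤) :
    opAt V i ⁅x, y⁆ = opAt V i x * opAt V i y - opAt V i y * opAt V i x := by
  rw [opAt_mul, opAt_mul, ← map_update_sub, opAt]
  congr 2
  ext v
  simp [Module.End.mul_apply, lie_lie]

section Basis

variable [FiniteDimensional ℂ 𝔤]
variable {d : ℕ} (b : Module.Basis (Fin d) ℂ 𝔤)
  (horth : ∀ a a' : Fin d, killingForm ℂ 𝔤 (b a) (b a') = if a = a' then 1 else 0)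

include horth

lemma expand (x : 𝔤) : x = ∑ c, killingForm ℂ 𝔤 x (b c) • b c := by
  have hrepr : ∀ c : Fin d, killingForm ℂ 𝔤 x (b c) = b.repr x c := by
    intro c
    conv_lhs => rw [← b.sum_repr x]
    simp only [map_sum, map_smul, LinearMap.sum_apply, LinearMap.smul_apply, horth, smul_eq_mul]
    simp [horth, Finset.sum_ite_eq', mul_comm]
  conv_lhs => rw [← b.sum_repr x]
  exact Finset.sum_congr rfl fun c _ => by rw [hrepr c]

lemma opAt_expand (i : Fin N) (x : 𝔤) :
    opAt V i x = ∑ c, killingForm ℂ 𝔤 x (b c) • opAt V i (b c) := by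
  conv_lhs => rw [expand b horth x]
  rw [← opAtL_apply V i, map_sum]
  simp

/-- Invariance of the split Casimir. -/
lemma casimir_swap (i k : Fin N) (y : 𝔤) :
    ∑ a, opAt V i ⁅y, b a⁆ * opAt V k (b a)
      = - ∑ a, opAt V i (b a) * opAt V k ⁅y, b a⁆ := by
  have key : ∀ a c : Fin d, killingForm ℂ 𝔤 ⁅y, b a⁆ (b c)
      = -killingForm ℂ 𝔤 ⁅y, b c⁆ (b a) := by
    intro a c
    rw [LieModule.traceForm_apply_lie_apply, LieModule.traceForm_apply_lie_apply,
      ← lie_skew (b a) (b c), map_neg]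
  calc ∑ a, opAt V i ⁅y, b a⁆ * opAt V k (b a)
      = ∑ a, ∑ c, killingForm ℂ 𝔤 ⁅y, b a⁆ (b c) • (opAt V i (b c) * opAt V k (b a)) := by
        refine Finset.sum_congr rfl fun a _ => ?_
        rw [opAt_expand V b horth i ⁅y, b a⁆, Finset.sum_mul]
        simp [smul_mul_assoc]
    _ = ∑ a, ∑ c, -(killingForm ℂ 𝔤 ⁅y, b c⁆ (b a) • (opAt V i (b c) * opAt V k (b a))) := by
        refine Finset.sum_congr rfl fun a _ => Finset.sum_congr rfl fun c _ => ?_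
        rw [key a c]; exact neg_smul (killingForm ℂ 𝔤 ⁅y, b c⁆ (b a)) (opAt V i (b c) * opAt V k (b a))
    _ = - ∑ c, ∑ a, killingForm ℂ 𝔤 ⁅y, b c⁆ (b a) • (opAt V i (b c) * opAt V k (b a)) := by
        rw [← Finset.sum_neg_distrib]
        rw [Finset.sum_comm]
        simp [Finset.sum_neg_distrib]
    _ = - ∑ c, opAt V i (b c) * opAt V k ⁅y, b c⁆ := by
        congr 1
        refine Finset.sum_congr rfl fun c _ => ?_
        rw [opAt_expand V b horth k ⁅y, b c⁆, Finset.mul_sum]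
        simp [mul_smul_comm]

end Basis

/-- The split Casimir operator `Ω_{ik} = ∑_a x_a^{(i)} x_a^{(k)}`. -/
def Omega {d : ℕ} (b : Fin d → 𝔤) (i k : Fin N) : Module.End ℂ (⨂[ℂ] j, V j) :=
  ∑ a, opAt V i (b a) * opAt V k (b a)

lemma omega_symm {d : ℕ} (b : Fin d → 𝔤) {i k : Fin N} (h : i ≠ k) :
    Omega V b i k = Omega V b k i :=
  Finset.sum_congr rfl fun a _ => opAt_comm V i k h _ _

lemma omega_comm_opAt {d : ℕ} (b : Fin d → 𝔤) {i k j : Fin N} (hi : j ≠ i) (hk : j ≠ k)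
    (y : 𝔤) : Commute (Omega V b i k) (opAt V j y) :=
  Commute.sum_left _ _ _ fun a _ =>
    Commute.mul_left (opAt_comm V i j hi.symm (b a) y) (opAt_comm V k j hk.symm (b a) y)

lemma omega_comm_omega {d : ℕ} (b : Fin d → 𝔤) {p q r s : Fin N}
    (h1 : r ≠ p) (h2 : r ≠ q) (h3 : s ≠ p) (h4 : s ≠ q) :
    Commute (Omega V b p q) (Omega V b r s) :=
  Commute.sum_right _ _ _ fun a _ =>
    Commute.mul_right (omega_comm_opAt V b h1 h2 (b a)) (omega_comm_opAt V b h3 h4 (b a))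

lemma omega_lie_single {d : ℕ} (b : Fin d → 𝔤) {i j : Fin N} (h : i ≠ j) (y : 𝔤) :
    Omega V b i j * opAt V j y - opAt V j y * Omega V b i j
      = ∑ a, opAt V i (b a) * opAt V j ⁅b a, y⁆ := by
  rw [Omega, Finset.sum_mul, Finset.mul_sum, ← Finset.sum_sub_distrib]
  refine Finset.sum_congr rfl fun a _ => ?_
  have hCA : opAt V j y * opAt V i (b a) = opAt V i (b a) * opAt V j y :=
    opAt_comm V j i h.symm _ _
  have h1 : opAt V j y * (opAt V i (b a) * opAt V j (b a))
      = opAt V i (b a) * (opAt V j y * opAt V j (b a)) := by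
    rw [← mul_assoc, hCA, mul_assoc]
  rw [h1, mul_assoc, ← mul_sub, ← opAt_lie]

lemma mu_term {d : ℕ} (b : Fin d → 𝔤) (μ : Module.Dual ℂ 𝔤) (p : Fin N) :
    ∑ a, μ (b a) • opAt V p (b a) = opAt V p (∑ a, μ (b a) • b a) := by
  rw [← opAtL_apply, map_sum]
  simp

section Basis2

variable [FiniteDimensional ℂ 𝔤]
variable {d : ℕ} (b : Module.Basis (Fin d) ℂ 𝔤)
  (horth : ∀ a a' : Fin d, killingForm ℂ 𝔤 (b a) (b a') = if a = a' then 1 else 0)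

include horth

lemma cross_cancel (i j : Fin N) (hij : i ≠ j) (y : 𝔤) :
    ∑ a, opAt V j (b a) * opAt V i ⁅b a, y⁆
      = -∑ a, opAt V i (b a) * opAt V j ⁅b a, y⁆ := by
  have h1 : ∑ a, opAt V j (b a) * opAt V i ⁅b a, y⁆
      = ∑ a, opAt V i ⁅b a, y⁆ * opAt V j (b a) :=
    Finset.sum_congr rfl fun a _ => opAt_comm V j i hij.symm _ _
  have h2 : ∀ a : Fin d, opAt V i ⁅b a, y⁆ = -opAt V i ⁅y, b a⁆ := fun a => by
    rw [← lie_skew y (b a), opAt_neg, neg_neg]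
  have h3 : ∀ a : Fin d, opAt V j ⁅b a, y⁆ = -opAt V j ⁅y, b a⁆ := fun a => by
    rw [← lie_skew y (b a), opAt_neg, neg_neg]
  rw [h1]
  calc ∑ a, opAt V i ⁅b a, y⁆ * opAt V j (b a)
      = -∑ a, opAt V i ⁅y, b a⁆ * opAt V j (b a) := by
        rw [← Finset.sum_neg_distrib]
        refine Finset.sum_congr rfl fun a _ => ?_
        rw [h2 a]; exact neg_mul (α := Module.End ℂ (⨂[ℂ] j, V j)) _ _
    _ = ∑ a, opAt V i (b a) * opAt V j ⁅y, b a⁆ := by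
        rw [casimir_swap V b horth i j y, neg_neg]
    _ = -∑ a, opAt V i (b a) * opAt V j ⁅b a, y⁆ := by
        rw [← Finset.sum_neg_distrib]
        refine Finset.sum_congr rfl fun a _ => ?_
        rw [h3 a, mul_neg (α := Module.End ℂ (⨂[ℂ] j, V j)), neg_neg]

omit horth in
lemma omega_br_step {i j k : Fin N} (hij : i ≠ j) (hik : i ≠ k) (hjk : j ≠ k) :
    Omega V (⇑b) i j * Omega V (⇑b) j k - Omega V (⇑b) j k * Omega V (⇑b) i j
      = ∑ c, (∑ a, opAt V i (b a) * opAt V j ⁅b a, b c⁆) * opAt V k (b c) := by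
  have hrw : Omega V (⇑b) j k = ∑ c, opAt V j (b c) * opAt V k (b c) := rfl
  rw [hrw, Finset.mul_sum, Finset.sum_mul, ← Finset.sum_sub_distrib]
  refine Finset.sum_congr rfl fun c _ => ?_
  have hC : Commute (Omega V (⇑b) i j) (opAt V k (b c)) :=
    omega_comm_opAt V (⇑b) hik.symm hjk.symm (b c)
  have h2 : opAt V j (b c) * opAt V k (b c) * Omega V (⇑b) i j
      = opAt V j (b c) * Omega V (⇑b) i j * opAt V k (b c) := by
    rw [mul_assoc, ← hC.eq, ← mul_assoc]
  rw [h2, ← omega_lie_single V (⇑b) hij (b c), sub_mul, mul_assoc,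
    mul_assoc (Omega V (⇑b) i j)]

lemma omega_invariance {i j k : Fin N} (hij : i ≠ j) (hik : i ≠ k) (hjk : j ≠ k) :
    Omega V (⇑b) i j * Omega V (⇑b) j k - Omega V (⇑b) j k * Omega V (⇑b) i j
      = -(Omega V (⇑b) i j * Omega V (⇑b) i k - Omega V (⇑b) i k * Omega V (⇑b) i j) := by
  rw [omega_br_step V b hij hik hjk]
  have h2 : Omega V (⇑b) i j * Omega V (⇑b) i k - Omega V (⇑b) i k * Omega V (⇑b) i j
      = ∑ c, (∑ a, opAt V j (b a) * opAt V i ⁅b a, b c⁆) * opAt V k (b c) := by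
    rw [omega_symm V (⇑b) hij]
    exact omega_br_step V b hij.symm hjk hik
  rw [h2, ← Finset.sum_neg_distrib]
  refine Finset.sum_congr rfl fun c _ => ?_
  rw [cross_cancel V b horth i j hij (b c)]
  exact (neg_mul_neg_helper _ _).symm

end Basis2

lemma expand4 {R : Type*} [Ring R] (A B C D : R) :
    (A + B) * (C + D) - (C + D) * (A + B)
      = (A * C - C * A) + (((A * D - D * A) + (B * C - C * B)) + (B * D - D * B)) := by
  noncomm_ring

/-- Commutator of the `Ω`-part with a single-site operator. -/
lemma SP_comm {d : ℕ} (b : Fin d → 𝔤) (z : Fin N → ℂ) {p q : Fin N} (hpq : p ≠ q) (y : 𝔤) :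
    (∑ k ∈ Finset.univ.erase p, (z p - z k)⁻¹ • Omega V b p k) * opAt V q y
      - opAt V q y * (∑ k ∈ Finset.univ.erase p, (z p - z k)⁻¹ • Omega V b p k)
      = (z p - z q)⁻¹ • ∑ a, opAt V p (b a) * opAt V q ⁅b a, y⁆ := by
  classical
  rw [Finset.sum_mul, Finset.mul_sum, ← Finset.sum_sub_distrib]
  have hterm : ∀ k ∈ Finset.univ.erase p,
      ((z p - z k)⁻¹ • Omega V b p k) * opAt V q y
        - opAt V q y * ((z p - z k)⁻¹ • Omega V b p k)
      = (z p - z k)⁻¹ • (Omega V b p k * opAt V q y - opAt V q y * Omega V b p k) := by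
    intro k _
    rw [smul_mul_assoc, mul_smul_comm]
    exact (smul_sub _ _ _).symm
  rw [Finset.sum_congr rfl hterm,
    Finset.sum_eq_single_of_mem q (Finset.mem_erase.mpr ⟨hpq.symm, Finset.mem_univ q⟩)]
  · rw [omega_lie_single V b hpq y]
  · intro k _ hkq
    rw [(omega_comm_opAt V b hpq.symm (Ne.symm hkq) y).eq, sub_self, smul_zero]

section SS

variable [FiniteDimensional ℂ 𝔤]
variable {d : ℕ} (b : Module.Basis (Fin d) ℂ 𝔤)
  (horth : ∀ a a' : Fin d, killingForm ℂ 𝔤 (b a) (b a') = if a = a' then 1 else 0)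

include horth

/-- Commutativity of the homogeneous parts. -/
lemma SS_comm (z : Fin N → ℂ) (hz : Function.Injective z) {i j : Fin N} (hij : i ≠ j) :
    (∑ k ∈ Finset.univ.erase i, (z i - z k)⁻¹ • Omega V (⇑b) i k)
        * (∑ l ∈ Finset.univ.erase j, (z j - z l)⁻¹ • Omega V (⇑b) j l)
      - (∑ l ∈ Finset.univ.erase j, (z j - z l)⁻¹ • Omega V (⇑b) j l)
        * (∑ k ∈ Finset.univ.erase i, (z i - z k)⁻¹ • Omega V (⇑b) i k) = 0 := by
  classical
  have hzne : ∀ p q : Fin N, p ≠ q → z p - z q ≠ 0 := fun p q h =>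
    sub_ne_zero.mpr fun he => h (hz he)
  set f : Fin N → Fin N → Module.End ℂ (⨂[ℂ] j, V j) := fun k l =>
    ((z i - z k)⁻¹ * (z j - z l)⁻¹) •
      (Omega V (⇑b) i k * Omega V (⇑b) j l - Omega V (⇑b) j l * Omega V (⇑b) i k) with hf
  have h2 : (∑ l ∈ Finset.univ.erase j, (z j - z l)⁻¹ • Omega V (⇑b) j l)
        * (∑ k ∈ Finset.univ.erase i, (z i - z k)⁻¹ • Omega V (⇑b) i k)
      = ∑ k ∈ Finset.univ.erase i, ∑ l ∈ Finset.univ.erase j,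
          ((z j - z l)⁻¹ • Omega V (⇑b) j l) * ((z i - z k)⁻¹ • Omega V (⇑b) i k) := by
    rw [Finset.sum_mul_sum]
    exact Finset.sum_comm
  have step1 : (∑ k ∈ Finset.univ.erase i, (z i - z k)⁻¹ • Omega V (⇑b) i k)
        * (∑ l ∈ Finset.univ.erase j, (z j - z l)⁻¹ • Omega V (⇑b) j l)
      - (∑ l ∈ Finset.univ.erase j, (z j - z l)⁻¹ • Omega V (⇑b) j l)
        * (∑ k ∈ Finset.univ.erase i, (z i - z k)⁻¹ • Omega V (⇑b) i k)
      = ∑ k ∈ Finset.univ.erase i, ∑ l ∈ Finset.univ.erase j, f k l := by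
    rw [h2, Finset.sum_mul_sum, ← Finset.sum_sub_distrib]
    refine Finset.sum_congr rfl fun k _ => ?_
    rw [← Finset.sum_sub_distrib]
    refine Finset.sum_congr rfl fun l _ => ?_
    rw [smul_mul_smul_comm, smul_mul_smul_comm, mul_comm ((z j - z l)⁻¹)]
    exact (smul_sub _ _ _).symm
  rw [step1]
  have hmemj : j ∈ Finset.univ.erase i := Finset.mem_erase.mpr ⟨hij.symm, Finset.mem_univ j⟩
  have hmemi : i ∈ Finset.univ.erase j := Finset.mem_erase.mpr ⟨hij, Finset.mem_univ i⟩
  have hTj : (Finset.univ.erase j).erase i = (Finset.univ.erase i).erase j :=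
    Finset.erase_right_comm
  have inner : ∀ k, ∑ l ∈ Finset.univ.erase j, f k l
      = ∑ l ∈ (Finset.univ.erase i).erase j, f k l + f k i := fun k => by
    rw [← Finset.sum_erase_add _ _ hmemi, hTj]
  have hdiag : ∀ k ∈ (Finset.univ.erase i).erase j,
      ∑ l ∈ (Finset.univ.erase i).erase j, f k l = f k k := by
    intro k hk
    have hkj : k ≠ j := (Finset.mem_erase.mp hk).1
    have hki : k ≠ i := (Finset.mem_erase.mp (Finset.mem_erase.mp hk).2).1
    refine Finset.sum_eq_single_of_mem k hk fun l hl hlk => ?_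
    have hlj : l ≠ j := (Finset.mem_erase.mp hl).1
    have hli : l ≠ i := (Finset.mem_erase.mp (Finset.mem_erase.mp hl).2).1
    have hc : Commute (Omega V (⇑b) i k) (Omega V (⇑b) j l) :=
      omega_comm_omega V (⇑b) hij.symm hkj.symm hli hlk
    show ((z i - z k)⁻¹ * (z j - z l)⁻¹) •
      (Omega V (⇑b) i k * Omega V (⇑b) j l - Omega V (⇑b) j l * Omega V (⇑b) i k) = 0
    rw [hc.eq, sub_self, smul_zero]
  have hfji : f j i = 0 := by
    show ((z i - z j)⁻¹ * (z j - z i)⁻¹) •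
      (Omega V (⇑b) i j * Omega V (⇑b) j i - Omega V (⇑b) j i * Omega V (⇑b) i j) = 0
    rw [omega_symm V (⇑b) (Ne.symm hij), sub_self, smul_zero]
  have hkey : ∀ m ∈ (Finset.univ.erase i).erase j, (f m m + f m i) + f j m = 0 := by
    intro m hm
    have hmj : m ≠ j := (Finset.mem_erase.mp hm).1
    have hmi : m ≠ i := (Finset.mem_erase.mp (Finset.mem_erase.mp hm).2).1
    have him : i ≠ m := Ne.symm hmi
    have hjm : j ≠ m := Ne.symm hmj
    have e0 : Omega V (⇑b) i m * Omega V (⇑b) i j - Omega V (⇑b) i j * Omega V (⇑b) i m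
        = Omega V (⇑b) i j * Omega V (⇑b) j m - Omega V (⇑b) j m * Omega V (⇑b) i j := by
      rw [omega_invariance V b horth hij him hjm]
      exact (neg_sub _ _).symm
    have e1 : Omega V (⇑b) i m * Omega V (⇑b) j i - Omega V (⇑b) j i * Omega V (⇑b) i m
        = Omega V (⇑b) i j * Omega V (⇑b) j m - Omega V (⇑b) j m * Omega V (⇑b) i j := by
      rw [omega_symm V (⇑b) (Ne.symm hij)]
      exact e0
    have e2 : Omega V (⇑b) i m * Omega V (⇑b) j m - Omega V (⇑b) j m * Omega V (⇑b) i m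
        = -(Omega V (⇑b) i j * Omega V (⇑b) j m - Omega V (⇑b) j m * Omega V (⇑b) i j) := by
      conv_lhs => rw [omega_symm V (⇑b) hjm]
      rw [omega_invariance V b horth him hij (Ne.symm hjm), e0]
    have hcoef : (z i - z m)⁻¹ * (z j - z m)⁻¹
        = (z i - z m)⁻¹ * (z j - z i)⁻¹ + (z i - z j)⁻¹ * (z j - z m)⁻¹ := by
      have h1 := hzne i m him
      have h2 := hzne j m hjm
      have h3 := hzne j i hij.symm
      have h4 := hzne i j hij
      field_simp
      ring
    show ((z i - z m)⁻¹ * (z j - z m)⁻¹) •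
          (Omega V (⇑b) i m * Omega V (⇑b) j m - Omega V (⇑b) j m * Omega V (⇑b) i m)
        + ((z i - z m)⁻¹ * (z j - z i)⁻¹) •
          (Omega V (⇑b) i m * Omega V (⇑b) j i - Omega V (⇑b) j i * Omega V (⇑b) i m)
        + ((z i - z j)⁻¹ * (z j - z m)⁻¹) •
          (Omega V (⇑b) i j * Omega V (⇑b) j m - Omega V (⇑b) j m * Omega V (⇑b) i j) = 0
    rw [e1, e2, hcoef]
    module
  calc ∑ k ∈ Finset.univ.erase i, ∑ l ∈ Finset.univ.erase j, f k l
      = ∑ k ∈ Finset.univ.erase i,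
          (∑ l ∈ (Finset.univ.erase i).erase j, f k l + f k i) :=
        Finset.sum_congr rfl fun k _ => inner k
    _ = ∑ k ∈ (Finset.univ.erase i).erase j,
          (∑ l ∈ (Finset.univ.erase i).erase j, f k l + f k i)
        + (∑ l ∈ (Finset.univ.erase i).erase j, f j l + f j i) :=
        (Finset.sum_erase_add _ _ hmemj).symm
    _ = ∑ k ∈ (Finset.univ.erase i).erase j, (f k k + f k i)
        + (∑ l ∈ (Finset.univ.erase i).erase j, f j l + 0) := by
        rw [hfji]
        exact congrArg₂ (· + ·)
          (Finset.sum_congr rfl fun k hk => by rw [hdiag k hk]) rfl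
    _ = ∑ k ∈ (Finset.univ.erase i).erase j, (f k k + f k i)
        + ∑ k ∈ (Finset.univ.erase i).erase j, f j k := by rw [add_zero]
    _ = ∑ k ∈ (Finset.univ.erase i).erase j, ((f k k + f k i) + f j k) :=
        Finset.sum_add_distrib.symm
    _ = 0 := Finset.sum_eq_zero hkey

end SS

end GaudinAux

/-- for pairwise distinct `z₁, …, z_N` and any linear functional
`μ : 𝔤 → ℂ`, the inhomogeneous quadratic Gaudin Hamiltonians pairwise commute. -/
theorem inhomogeneous_gaudin_hamiltonians_commute
    [LieAlgebra.IsSemisimple ℂ 𝔤] [FiniteDimensional ℂ 𝔤]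
    [∀ i, FiniteDimensional ℂ (V i)]
    (hN : 0 < N) {d : ℕ} (b : Module.Basis (Fin d) ℂ 𝔤)
    (horth : ∀ a a' : Fin d, killingForm ℂ 𝔤 (b a) (b a') = if a = a' then 1 else 0)
    (z : Fin N → ℂ) (hz : Function.Injective z) (μ : Module.Dual ℂ 𝔤) (i j : Fin N) :
    gaudinHmu V (⇑b) μ z i * gaudinHmu V (⇑b) μ z j
      = gaudinHmu V (⇑b) μ z j * gaudinHmu V (⇑b) μ z i := by
  classical
  rcases eq_or_ne i j with rfl | hij
  · rfl
  refine sub_eq_zero.mp ?_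
  obtain ⟨y, hy⟩ : ∃ y : 𝔤, y = ∑ a, μ (b a) • b a := ⟨_, rfl⟩
  have hgaudin : ∀ p : Fin N, gaudinHmu V (⇑b) μ z p
      = (∑ k ∈ Finset.univ.erase p, (z p - z k)⁻¹ • GaudinAux.Omega V (⇑b) p k)
        + opAt V p y := by
    intro p
    simp only [gaudinHmu]
    rw [GaudinAux.mu_term, ← hy]
    rfl
  rw [hgaudin i, hgaudin j]
  refine (GaudinAux.expand4 _ _ _ _).trans ?_
  have G1 := GaudinAux.SS_comm V b horth z hz hij
  have GSPij := GaudinAux.SP_comm V (⇑b) z hij y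
  have GSPji := GaudinAux.SP_comm V (⇑b) z hij.symm y
  have G4 : opAt V i y * opAt V j y - opAt V j y * opAt V i y = 0 :=
    sub_eq_zero.mpr (GaudinAux.opAt_comm V i j hij y y)
  have h3 : opAt V i y * (∑ l ∈ Finset.univ.erase j, (z j - z l)⁻¹ • GaudinAux.Omega V (⇑b) j l)
      - (∑ l ∈ Finset.univ.erase j, (z j - z l)⁻¹ • GaudinAux.Omega V (⇑b) j l) * opAt V i y
      = -((z j - z i)⁻¹ • ∑ a, opAt V j (b a) * opAt V i ⁅b a, y⁆) := by
    rw [← GSPji]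
    exact (neg_sub _ _).symm
  have h4 : (z j - z i)⁻¹ = -(z i - z j)⁻¹ := by
    rw [← neg_sub (z i) (z j), inv_neg]
  have G2 : ((∑ k ∈ Finset.univ.erase i, (z i - z k)⁻¹ • GaudinAux.Omega V (⇑b) i k) * opAt V j y
        - opAt V j y * (∑ k ∈ Finset.univ.erase i, (z i - z k)⁻¹ • GaudinAux.Omega V (⇑b) i k))
      + (opAt V i y * (∑ l ∈ Finset.univ.erase j, (z j - z l)⁻¹ • GaudinAux.Omega V (⇑b) j l)
        - (∑ l ∈ Finset.univ.erase j, (z j - z l)⁻¹ • GaudinAux.Omega V (⇑b) j l) * opAt V i y)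
      = 0 := by
    rw [GSPij, h3, GaudinAux.cross_cancel V b horth i j hij y, h4]
    module
  rw [G1, G2, G4, add_zero, add_zero]
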